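/- Let c, a, b ∈ V with ϑ_0(a) = ϑ_0(b) and ϑ_0(a) ≠ ϑ_0(c). Then there exists a symplectic F_2-linear bijection A : V → V such that ϑ_c(A u) = ϑ_c(u) and ϑ_a(A u) = ϑ_b(u) for all u ∈ V. (That is, the stabilizer in Sp(2m,2) of a quadratic form of one type acts transitively on the quadratic forms of the other type: R⁺ is transitive on Ω⁻ and R⁻ is transitive on Ω⁺.) -/

import Mathlib

open Finset

/-- The symplectic bilinear form `⟨u,v⟩ = ∑_{i<m} (u_i v_{m+i} + u_{m+i} v_i)` on `(F_2)^{2m}`. -/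
def symp (m : ℕ) (u v : Fin (2*m) → ZMod 2) : ZMod 2 :=
  ∑ i : Fin m, (u ⟨i.1, by omega⟩ * v ⟨m + i.1, by omega⟩ +
    u ⟨m + i.1, by omega⟩ * v ⟨i.1, by omega⟩)

/-- The quadratic form `ϑ_0(u) = ∑_{i<m} u_i u_{m+i}`. -/
def th0 (m : ℕ) (u : Fin (2*m) → ZMod 2) : ZMod 2 :=
  ∑ i : Fin m, u ⟨i.1, by omega⟩ * u ⟨m + i.1, by omega⟩

/-- The quadratic form `ϑ_a(u) = ϑ_0(u) + ⟨a,u⟩`. -/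
def th (m : ℕ) (a u : Fin (2*m) → ZMod 2) : ZMod 2 :=
  th0 m u + symp m a u

namespace Stmt3Aux

lemma z2 (x : ZMod 2) : x = 0 ∨ x = 1 := by revert x; decide

lemma symp_comm (m : ℕ) (u v : Fin (2*m) → ZMod 2) : symp m u v = symp m v u := by
  unfold symp; exact Finset.sum_congr rfl (by intros; ring)

lemma symp_add_right (m : ℕ) (u v w : Fin (2*m) → ZMod 2) :
    symp m u (v + w) = symp m u v + symp m u w := by
  unfold symp; rw [← Finset.sum_add_distrib]
  exact Finset.sum_congr rfl (by intros; simp only [Pi.add_apply]; ring)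

lemma symp_add_left (m : ℕ) (u v w : Fin (2*m) → ZMod 2) :
    symp m (u + v) w = symp m u w + symp m v w := by
  rw [symp_comm, symp_add_right, symp_comm m w u, symp_comm m w v]

lemma symp_smul_right (m : ℕ) (u : Fin (2*m) → ZMod 2) (s : ZMod 2) (v : Fin (2*m) → ZMod 2) :
    symp m u (s • v) = s * symp m u v := by
  unfold symp; rw [Finset.mul_sum]
  exact Finset.sum_congr rfl (by intros; simp only [Pi.smul_apply, smul_eq_mul]; ring)

lemma symp_smul_left (m : ℕ) (s : ZMod 2) (u v : Fin (2*m) → ZMod 2) :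
    symp m (s • u) v = s * symp m u v := by
  rw [symp_comm, symp_smul_right, symp_comm m u v]

lemma symp_self (m : ℕ) (u : Fin (2*m) → ZMod 2) : symp m u u = 0 := by
  unfold symp
  apply Finset.sum_eq_zero
  intro i _
  have : ∀ x y : ZMod 2, x * y + y * x = 0 := by decide
  exact this _ _

lemma th0_add (m : ℕ) (u v : Fin (2*m) → ZMod 2) :
    th0 m (u + v) = th0 m u + th0 m v + symp m u v := by
  unfold th0 symp
  rw [← Finset.sum_add_distrib, ← Finset.sum_add_distrib]
  exact Finset.sum_congr rfl (by intros; simp only [Pi.add_apply]; ring)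

lemma th0_smul (m : ℕ) (s : ZMod 2) (u : Fin (2*m) → ZMod 2) :
    th0 m (s • u) = s * th0 m u := by
  unfold th0; rw [Finset.mul_sum]
  apply Finset.sum_congr rfl
  intro i _
  simp only [Pi.smul_apply, smul_eq_mul]
  have : ∀ s x y : ZMod 2, (s * x) * (s * y) = s * (x * y) := by decide
  exact this _ _ _

lemma th_add (m : ℕ) (e u v : Fin (2*m) → ZMod 2) :
    th m e (u + v) = th m e u + th m e v + symp m u v := by
  unfold th; rw [th0_add, symp_add_right]; ring

lemma th_smul (m : ℕ) (e : Fin (2*m) → ZMod 2) (s : ZMod 2) (u : Fin (2*m) → ZMod 2) :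
    th m e (s • u) = s * th m e u := by
  unfold th; rw [th0_smul, symp_smul_right]; ring

lemma th_index_add (m : ℕ) (a d u : Fin (2*m) → ZMod 2) :
    th m (a + d) u = th m a u + symp m d u := by
  unfold th; rw [symp_add_left]; ring

lemma vadd_self (m : ℕ) (v : Fin (2*m) → ZMod 2) : v + v = 0 := by
  ext i
  have : ∀ x : ZMod 2, x + x = 0 := by decide
  exact this _

/-- Transvection `u ↦ u + ⟨w,u⟩ w` as a linear map. -/
def tv (m : ℕ) (w : Fin (2*m) → ZMod 2) :
    (Fin (2*m) → ZMod 2) →ₗ[ZMod 2] (Fin (2*m) → ZMod 2) where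
  toFun u := u + symp m w u • w
  map_add' u v := by rw [symp_add_right, add_smul]; abel
  map_smul' s u := by
    simp only [RingHom.id_apply]
    rw [symp_smul_right, mul_smul, smul_add]

lemma tv_apply (m : ℕ) (w u : Fin (2*m) → ZMod 2) :
    tv m w u = u + symp m w u • w := rfl

lemma tv_invol (m : ℕ) (w u : Fin (2*m) → ZMod 2) : tv m w (tv m w u) = u := by
  rw [tv_apply, tv_apply, symp_add_right, symp_smul_right, symp_self, mul_zero, add_zero,
    add_assoc, ← add_smul]
  have : symp m w u + symp m w u = 0 := by
    have h : ∀ x : ZMod 2, x + x = 0 := by decide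
    exact h _
  rw [this, zero_smul, add_zero]

/-- Transvection as a linear equivalence. -/
def tvE (m : ℕ) (w : Fin (2*m) → ZMod 2) :
    (Fin (2*m) → ZMod 2) ≃ₗ[ZMod 2] (Fin (2*m) → ZMod 2) :=
  LinearEquiv.ofLinear (tv m w) (tv m w)
    (LinearMap.ext fun u => by simp [LinearMap.comp_apply, tv_invol])
    (LinearMap.ext fun u => by simp [LinearMap.comp_apply, tv_invol])

lemma tvE_apply (m : ℕ) (w u : Fin (2*m) → ZMod 2) : tvE m w u = tv m w u := rfl

lemma symp_tv (m : ℕ) (w u v : Fin (2*m) → ZMod 2) :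
    symp m (tv m w u) (tv m w v) = symp m u v := by
  rw [tv_apply, tv_apply]
  simp only [symp_add_left, symp_add_right, symp_smul_left, symp_smul_right, symp_self,
    mul_zero, add_zero]
  rw [symp_comm m u w]
  have : ∀ S B C : ZMod 2, S + B * C + C * B = S := by decide
  exact this _ _ _

lemma th_tv (m : ℕ) (e w u : Fin (2*m) → ZMod 2) :
    th m e (tv m w u) = th m e u + symp m w u * (th m e w + 1) := by
  rw [tv_apply, th_add, th_smul, symp_smul_right, symp_comm m u w]
  have : ∀ T W s : ZMod 2, T + s * W + s * s = T + s * (W + 1) := by decide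
  exact this _ _ _

lemma symp_tv_left (m : ℕ) (x w u : Fin (2*m) → ZMod 2) (h : symp m x w = 0) :
    symp m x (tv m w u) = symp m x u := by
  rw [tv_apply, symp_add_right, symp_smul_right, h, mul_zero, add_zero]

/-- Eichler transformation `u ↦ u + ⟨p,u⟩ q + ⟨q,u⟩ p` as a linear map. -/
def ei (m : ℕ) (p q : Fin (2*m) → ZMod 2) :
    (Fin (2*m) → ZMod 2) →ₗ[ZMod 2] (Fin (2*m) → ZMod 2) where
  toFun u := u + symp m p u • q + symp m q u • p
  map_add' u v := by rw [symp_add_right, symp_add_right, add_smul, add_smul]; abel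
  map_smul' s u := by
    simp only [RingHom.id_apply]
    rw [symp_smul_right, symp_smul_right, mul_smul, mul_smul, smul_add, smul_add]

lemma ei_apply (m : ℕ) (p q u : Fin (2*m) → ZMod 2) :
    ei m p q u = u + symp m p u • q + symp m q u • p := rfl

lemma ei_invol (m : ℕ) (p q : Fin (2*m) → ZMod 2) (hpq : symp m p q = 0)
    (u : Fin (2*m) → ZMod 2) : ei m p q (ei m p q u) = u := by
  have hqp : symp m q p = 0 := by rw [symp_comm]; exact hpq
  have h1 : symp m p (ei m p q u) = symp m p u := by
    rw [ei_apply, symp_add_right, symp_add_right, symp_smul_right, symp_smul_right,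
      symp_self, hpq, mul_zero, mul_zero, add_zero, add_zero]
  have h2 : symp m q (ei m p q u) = symp m q u := by
    rw [ei_apply, symp_add_right, symp_add_right, symp_smul_right, symp_smul_right,
      symp_self, hqp, mul_zero, mul_zero, add_zero, add_zero]
  rw [ei_apply m p q (ei m p q u), h1, h2, ei_apply]
  have hx : ∀ x : ZMod 2, x + x = 0 := by decide
  rw [show u + symp m p u • q + symp m q u • p + symp m p u • q + symp m q u • p
      = u + ((symp m p u + symp m p u) • q + (symp m q u + symp m q u) • p) by
    rw [add_smul, add_smul]; abel]
  rw [hx, hx, zero_smul, zero_smul, add_zero, add_zero]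

/-- Eichler transformation as a linear equivalence. -/
def eiE (m : ℕ) (p q : Fin (2*m) → ZMod 2) (hpq : symp m p q = 0) :
    (Fin (2*m) → ZMod 2) ≃ₗ[ZMod 2] (Fin (2*m) → ZMod 2) :=
  LinearEquiv.ofLinear (ei m p q) (ei m p q)
    (LinearMap.ext fun u => by simp [LinearMap.comp_apply, ei_invol m p q hpq])
    (LinearMap.ext fun u => by simp [LinearMap.comp_apply, ei_invol m p q hpq])

lemma eiE_apply (m : ℕ) (p q u : Fin (2*m) → ZMod 2) (hpq : symp m p q = 0) :
    eiE m p q hpq u = ei m p q u := rfl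

lemma symp_ei (m : ℕ) (p q : Fin (2*m) → ZMod 2) (hpq : symp m p q = 0)
    (u v : Fin (2*m) → ZMod 2) : symp m (ei m p q u) (ei m p q v) = symp m u v := by
  have hqp : symp m q p = 0 := by rw [symp_comm]; exact hpq
  rw [ei_apply, ei_apply]
  simp only [symp_add_left, symp_add_right, symp_smul_left, symp_smul_right, symp_self,
    hpq, hqp, mul_zero, add_zero, zero_mul]
  rw [symp_comm m u q, symp_comm m u p]
  have : ∀ S A B C D : ZMod 2, S + A * D + B * C + C * B + D * A = S := by decide
  exact this _ _ _ _ _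

lemma th_ei (m : ℕ) (p q : Fin (2*m) → ZMod 2) (hpq : symp m p q = 0)
    (e u : Fin (2*m) → ZMod 2) :
    th m e (ei m p q u) = th m e u + symp m p u * th m e q + symp m q u * th m e p := by
  have hqp : symp m q p = 0 := by rw [symp_comm]; exact hpq
  rw [ei_apply, th_add, th_add, th_smul, th_smul]
  simp only [symp_add_left, symp_add_right, symp_smul_left, symp_smul_right, symp_self,
    hpq, hqp, mul_zero, add_zero, zero_mul]
  rw [symp_comm m u q, symp_comm m u p]
  have : ∀ T X Y A B : ZMod 2, T + A * X + A * B + B * Y + B * A = T + A * X + B * Y := by decide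
  exact this _ _ _ _ _

/-- Symplectic-dual index flip. -/
def dflip (m : ℕ) (j : Fin (2*m)) : Fin (2*m) :=
  if h : j.1 < m then ⟨m + j.1, by omega⟩ else ⟨j.1 - m, by omega⟩

lemma dflip_val_lt (m : ℕ) (j : Fin (2*m)) (h : j.1 < m) : (dflip m j).1 = m + j.1 := by
  simp only [dflip, dif_pos h]

lemma dflip_val_ge (m : ℕ) (j : Fin (2*m)) (h : ¬ j.1 < m) : (dflip m j).1 = j.1 - m := by
  simp only [dflip, dif_neg h]

lemma dflip_dflip (m : ℕ) (j : Fin (2*m)) : dflip m (dflip m j) = j := by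
  have hj := j.2
  apply Fin.ext
  by_cases h : j.1 < m
  · have h1 := dflip_val_lt m j h
    have h2 : ¬ (dflip m j).1 < m := by omega
    rw [dflip_val_ge m _ h2, h1]
    omega
  · have h1 := dflip_val_ge m j h
    have h2 : (dflip m j).1 < m := by omega
    rw [dflip_val_lt m _ h2, h1]
    omega

lemma symp_single (m : ℕ) (y : Fin (2*m) → ZMod 2) (k : Fin (2*m)) :
    symp m y (Pi.single k 1) = y (dflip m k) := by
  have hk2 := k.2
  unfold symp dflip
  split_ifs with h
  · rw [Finset.sum_eq_single ⟨k.1, h⟩]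
    · have h1 : (⟨m + k.1, by omega⟩ : Fin (2*m)) ≠ k := by
        simp only [ne_eq, Fin.ext_iff]; omega
      have h2 : (⟨k.1, by omega⟩ : Fin (2*m)) = k := by
        apply Fin.ext; rfl
      rw [h2, Pi.single_eq_same, Pi.single_eq_of_ne h1, mul_zero, mul_one, zero_add]
    · intro i _ hne
      have h1 : (⟨m + i.1, by omega⟩ : Fin (2*m)) ≠ k := by
        simp only [ne_eq, Fin.ext_iff]; omega
      have h2 : (⟨i.1, by omega⟩ : Fin (2*m)) ≠ k := by
        simp only [ne_eq, Fin.ext_iff]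
        intro hh
        exact hne (Fin.ext hh)
      rw [Pi.single_eq_of_ne h1, Pi.single_eq_of_ne h2, mul_zero, mul_zero, add_zero]
    · intro hh; exact absurd (Finset.mem_univ _) hh
  · have hm : 0 < m := by omega
    rw [Finset.sum_eq_single ⟨k.1 - m, by omega⟩]
    · have h1 : (⟨m + (k.1 - m), by omega⟩ : Fin (2*m)) = k := by
        apply Fin.ext; simp; omega
      have h2 : (⟨k.1 - m, by omega⟩ : Fin (2*m)) ≠ k := by
        simp only [ne_eq, Fin.ext_iff]; omega
      rw [h1, Pi.single_eq_same, Pi.single_eq_of_ne h2, mul_zero, mul_one, add_zero]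
    · intro i _ hne
      have h1 : (⟨m + i.1, by omega⟩ : Fin (2*m)) ≠ k := by
        simp only [ne_eq, Fin.ext_iff]
        intro hh
        exact hne (Fin.ext (by simp; omega))
      have h2 : (⟨i.1, by omega⟩ : Fin (2*m)) ≠ k := by
        simp only [ne_eq, Fin.ext_iff]; omega
      rw [Pi.single_eq_of_ne h1, Pi.single_eq_of_ne h2, mul_zero, mul_zero, add_zero]
    · intro hh; exact absurd (Finset.mem_univ _) hh

lemma exists_x (m : ℕ) (d e : Fin (2*m) → ZMod 2) (he : e ≠ 0) (hde : d ≠ e) :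
    ∃ x, symp m d x = 0 ∧ symp m e x = 1 := by
  by_cases hj : ∃ j, e j = 1 ∧ d j = 0
  · obtain ⟨j, hej, hdj⟩ := hj
    refine ⟨Pi.single (dflip m j) 1, ?_, ?_⟩
    · rw [symp_single, dflip_dflip, hdj]
    · rw [symp_single, dflip_dflip, hej]
  · push_neg at hj
    obtain ⟨j, hj0⟩ := Function.ne_iff.mp he
    have hej : e j = 1 := (z2 (e j)).resolve_left (by simpa using hj0)
    have hdj : d j = 1 := by
      rcases z2 (d j) with h | h
      · exact absurd h (by simpa using hj j hej)
      · exact h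
    obtain ⟨k, hk⟩ := Function.ne_iff.mp hde
    have hek : e k = 0 := by
      rcases z2 (e k) with h | h
      · exact h
      · rcases z2 (d k) with h' | h'
        · exact absurd h' (by simpa using hj k h)
        · rw [h, h'] at hk; exact absurd rfl hk
    have hdk : d k = 1 := by
      rcases z2 (d k) with h | h
      · rw [h, hek] at hk; exact absurd rfl hk
      · exact h
    refine ⟨Pi.single (dflip m j) 1 + Pi.single (dflip m k) 1, ?_, ?_⟩
    · rw [symp_add_right, symp_single, symp_single, dflip_dflip, dflip_dflip, hdj, hdk]
      decide
    · rw [symp_add_right, symp_single, symp_single, dflip_dflip, dflip_dflip, hej, hek]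
      decide

end Stmt3Aux

/-- The stabilizer in `Sp(2m,2)` of a quadratic form of one type acts transitively on the
quadratic forms of the other type: if `ϑ_0(a) = ϑ_0(b)` and `ϑ_0(a) ≠ ϑ_0(c)`, then some
symplectic linear bijection fixes `ϑ_c` and carries `ϑ_a` to `ϑ_b`. -/
theorem stmt_3 (m : ℕ) (hm : 1 ≤ m) (c a b : Fin (2*m) → ZMod 2)
    (h1 : th0 m a = th0 m b) (h2 : th0 m a ≠ th0 m c) :
    ∃ A : (Fin (2*m) → ZMod 2) ≃ₗ[ZMod 2] (Fin (2*m) → ZMod 2),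
      (∀ u v, symp m (A u) (A v) = symp m u v) ∧
      (∀ u, th m c (A u) = th m c u) ∧
      (∀ u, th m a (A u) = th m b u) := by
  classical
  open Stmt3Aux in
  by_cases hab : a = b
  · exact ⟨LinearEquiv.refl _ _, fun u v => rfl, fun u => rfl, fun u => by
      simp only [LinearEquiv.refl_apply, hab]⟩
  · set d := a + b with hd
    have hbd : a + d = b := by rw [hd, ← add_assoc, vadd_self, zero_add]
    have had : th m a d = 0 := by
      rw [hd]
      unfold th
      rw [th0_add, symp_add_right, symp_self]
      have : ∀ A B S : ZMod 2, A = B → A + B + S + (0 + S) = 0 := by decide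
      exact this _ _ _ h1
    have hthb : ∀ u, th m b u = th m a u + symp m d u := fun u => by
      rw [← hbd, th_index_add]
    by_cases hcd : th m c d = 1
    · refine ⟨tvE m d, fun u v => ?_, fun u => ?_, fun u => ?_⟩
      · rw [tvE_apply, tvE_apply, symp_tv]
      · rw [tvE_apply, th_tv, hcd]
        have : ∀ T s : ZMod 2, T + s * (1 + 1) = T := by decide
        exact this _ _
      · rw [tvE_apply, th_tv, had, hthb u]
        have : ∀ T s : ZMod 2, T + s * (0 + 1) = T + s := by decide
        exact this _ _
    · have hcd0 : th m c d = 0 := (z2 _).resolve_right hcd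
      have haddac : a + (a + c) = c := by rw [← add_assoc, vadd_self, zero_add]
      have hene : a + c ≠ 0 := by
        intro h
        rw [h, add_zero] at haddac
        exact h2 (by rw [haddac])
      have hde : d ≠ a + c := by
        intro h
        have : b = c := by rw [← hbd, h, haddac]
        exact h2 (h1.trans (by rw [this]))
      obtain ⟨x, hx0, hx1⟩ := exists_x m d (a + c) hene hde
      have hsax : symp m a x + symp m c x = 1 := by rw [← symp_add_left]; exact hx1
      have hcx : th m c x = th m a x + 1 := by
        unfold th
        have : ∀ T A C : ZMod 2, A + C = 1 → T + C = T + A + 1 := by decide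
        exact this _ _ _ hsax
      have hxd : symp m x d = 0 := by rw [symp_comm]; exact hx0
      have h3 : th m a (x + d) = th m a x := by
        rw [th_add, had, hxd, add_zero, add_zero]
      have h4 : th m c (x + d) = th m c x := by
        rw [th_add, hcd0, hxd, add_zero, add_zero]
      have hsxxd : symp m x (x + d) = 0 := by
        rw [symp_add_right, symp_self, hxd, add_zero]
      rcases z2 (th m a x) with hax | hax
      · -- two transvections
        have hcx1 : th m c x = 1 := by rw [hcx, hax, zero_add]
        refine ⟨(tvE m (x + d)).trans (tvE m x), fun u v => ?_, fun u => ?_, fun u => ?_⟩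
        · rw [LinearEquiv.trans_apply, LinearEquiv.trans_apply, tvE_apply, tvE_apply,
            tvE_apply, tvE_apply, symp_tv, symp_tv]
        · rw [LinearEquiv.trans_apply, tvE_apply, tvE_apply, th_tv, th_tv, hcx1, h4, hcx1]
          have : ∀ T A B : ZMod 2, T + A * (1 + 1) + B * (1 + 1) = T := by decide
          exact this _ _ _
        · rw [LinearEquiv.trans_apply, tvE_apply, tvE_apply, th_tv, th_tv, hax, h3, hax,
            symp_tv_left m x (x + d) u hsxxd, hthb u, symp_add_left]
          have : ∀ T X D : ZMod 2, T + (X + D) * (0 + 1) + X * (0 + 1) = T + D := by decide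
          exact this _ _ _
      · -- Eichler transformation
        have hax1 : th m a x = 1 := hax
        have hcx0 : th m c x = 0 := by rw [hcx, hax1]; decide
        have hthaq : th m a (x + d) = 1 := by rw [h3, hax1]
        have hthcq : th m c (x + d) = 0 := by rw [h4, hcx0]
        refine ⟨eiE m x (x + d) hsxxd, fun u v => ?_, fun u => ?_, fun u => ?_⟩
        · rw [eiE_apply, eiE_apply, symp_ei m x (x + d) hsxxd]
        · rw [eiE_apply, th_ei m x (x + d) hsxxd, hcx0, hthcq, mul_zero, mul_zero,
            add_zero, add_zero]
        · rw [eiE_apply, th_ei m x (x + d) hsxxd, hax1, hthaq, hthb u, symp_add_left]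
          have : ∀ T X D : ZMod 2, T + X * 1 + (X + D) * 1 = T + D := by decide
          exact this _ _ _
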